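/- For natural numbers n ≥ 3, there is no representation 2^(2^n) - 1 = 2 · (2^c+1)^(d₂) + (2^c+1)^(d₂') with c ≥ 3. -/

import Mathlib

theorem no_repr_case_two (n c d₂ d₂' : ℕ) (hn : 3 ≤ n) (hc : 3 ≤ c) :
    2 ^ (2 ^ n) - 1 ≠ 2 * (2 ^ c + 1) ^ d₂ + (2 ^ c + 1) ^ d₂' := by
  intro h
  have hc8 : (2 ^ c + 1) % 8 = 1 := by
    obtain ⟨k, rfl⟩ := Nat.exists_eq_add_of_le hc
    rw [pow_add]
    have : (0:ℕ) < 2 ^ k := Nat.pow_pos (by norm_num)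
    norm_num
  have hA : ∀ d : ℕ, (2 ^ c + 1) ^ d % 8 = 1 := by
    intro d
    simp [Nat.pow_mod, hc8]
  have h3 : 3 ≤ 2 ^ n := le_trans (by norm_num) (Nat.pow_le_pow_right (by norm_num) hn)
  obtain ⟨k, hk⟩ := Nat.exists_eq_add_of_le h3
  have hL : 2 ^ (2 ^ n) = 8 * 2 ^ k := by rw [hk, pow_add]; ring
  have hkpos : (0:ℕ) < 2 ^ k := Nat.pow_pos (by norm_num)
  have h1 := hA d₂
  have h2 := hA d₂'
  rw [hL] at h
  omega
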